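/- For the FtP exchange argument: if x_t minimizes x ↦ ℓ_t(x) + 2·dist(x, p_t), then for any state o_t, we have 2·dist(o_t, x_t) + ℓ_t(x_t) − ℓ_t(o_t) ≤ 4·dist(o_t, p_t). -/

import Mathlib

open scoped ENNReal

/-- **FtP exchange argument.** If `x` minimizes `y ↦ ℓ(y) + 2·dist(y, p)` and
`ℓ o < ∞`, then `2·dist(o, x) + ℓ(x) − ℓ(o) ≤ 4·dist(o, p)`. -/
theorem ftp_exchange {X : Type*} [MetricSpace X] (ℓ : X → ℝ≥0∞) (p o x : X)
    (hmin : ∀ y : X, ℓ x + 2 * edist x p ≤ ℓ y + 2 * edist y p)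
    (ho : ℓ o < ⊤) :
    2 * edist o x + ℓ x - ℓ o ≤ 4 * edist o p := by
  rw [tsub_le_iff_right]
  have htri : edist o x ≤ edist o p + edist x p := by
    calc edist o x ≤ edist o p + edist p x := edist_triangle o p x
    _ = edist o p + edist x p := by rw [edist_comm p x]
  calc 2 * edist o x + ℓ x ≤ 2 * (edist o p + edist x p) + ℓ x := by
        gcongr
    _ = 2 * edist o p + (ℓ x + 2 * edist x p) := by ring
    _ ≤ 2 * edist o p + (ℓ o + 2 * edist o p) := add_le_add_right (hmin o) _
    _ = 4 * edist o p + ℓ o := by ring
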